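/- The set {(f,g) ∈ ℝ[z]² : deg(f) = deg(g)} is Diophantine over ℝ[z], where deg denotes the usual degree of a polynomial with the convention that nonzero constants have degree 0 and the degree of 0 is 0. -/

import Mathlib

/-- A set `X ⊆ R^n` is *Diophantine* over `R` if there are finitely many polynomials
`F₁, …, F_r ∈ R[x₁,…,x_n,y₁,…,y_m]` such that `X` is the set of `a ∈ R^n` for which the
system `F_j(a, b) = 0` (for all `j`) has a solution `b ∈ R^m`. -/
def IsDiophantine {R : Type*} [CommRing R] {n : ℕ} (X : Set (Fin n → R)) : Prop :=
  ∃ (m r : ℕ) (F : Fin r → MvPolynomial (Fin n ⊕ Fin m) R),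
    ∀ a : Fin n → R, a ∈ X ↔
      ∃ b : Fin m → R, ∀ j : Fin r, MvPolynomial.eval (Sum.elim a b) (F j) = 0

/-- A set `X ⊆ R` is Diophantine over `R` (one-variable case of `IsDiophantine`). -/
def IsDiophantine1 {R : Type*} [CommRing R] (X : Set R) : Prop :=
  ∃ (m r : ℕ) (F : Fin r → MvPolynomial (Fin 1 ⊕ Fin m) R),
    ∀ a : R, a ∈ X ↔
      ∃ b : Fin m → R, ∀ j : Fin r, MvPolynomial.eval (Sum.elim (fun _ => a) b) (F j) = 0

/-- A set `X ⊆ R²` is Diophantine over `R` (two-variable case of `IsDiophantine`). -/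
def IsDiophantine2 {R : Type*} [CommRing R] (X : Set (R × R)) : Prop :=
  ∃ (m r : ℕ) (F : Fin r → MvPolynomial (Fin 2 ⊕ Fin m) R),
    ∀ a : R × R, a ∈ X ↔
      ∃ b : Fin m → R, ∀ j : Fin r, MvPolynomial.eval (Sum.elim ![a.1, a.2] b) (F j) = 0


open Polynomial Filter in
private lemma sq_dvd_of_nonneg_of_root (p : ℝ[X]) (hp : ∀ x, 0 ≤ p.eval x) {u : ℝ}
    (hu : p.eval u = 0) : (X - C u) ^ 2 ∣ p := by
  obtain ⟨s, hs⟩ : (X - C u) ∣ p := dvd_iff_isRoot.2 hu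
  have hmin : IsLocalMin (fun x => p.eval x) u :=
    Filter.Eventually.of_forall (fun x => by simpa [hu] using hp x)
  have hder : p.derivative.eval u = 0 := by rw [← Polynomial.deriv]; exact hmin.deriv_eq_zero
  have hds : p.derivative = s + (X - C u) * s.derivative := by rw [hs]; simp [derivative_mul]
  have hs0 : s.eval u = 0 := by have := hder; rw [hds] at this; simpa using this
  obtain ⟨t, ht⟩ : (X - C u) ∣ s := dvd_iff_isRoot.2 hs0
  exact ⟨t, by rw [hs, ht]; ring⟩

open Polynomial Filter in
private lemma nonneg_sos_aux : ∀ (n : ℕ) (p : ℝ[X]), p.natDegree ≤ n → (∀ x, 0 ≤ p.eval x) →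
    ∃ a b : ℝ[X], p = a ^ 2 + b ^ 2 := by
  intro n
  induction n using Nat.strong_induction_on with
  | _ n ih =>
    intro p hdeg hp
    by_cases h0 : p.natDegree = 0
    · obtain ⟨c, rfl⟩ := natDegree_eq_zero.mp h0
      have hc : 0 ≤ c := by simpa using hp 0
      exact ⟨C (Real.sqrt c), 0, by rw [← C_pow, Real.sq_sqrt hc]; ring⟩
    · have hp0 : p ≠ 0 := fun h => h0 (by simp [h])
      have hdeg' : 0 < (p.map (algebraMap ℝ ℂ)).degree := by
        rw [degree_map, degree_eq_natDegree hp0]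
        exact_mod_cast Nat.pos_of_ne_zero h0
      obtain ⟨z, hz⟩ := Complex.exists_root hdeg'
      obtain ⟨t, ht⟩ : (X - C z.re) ^ 2 + C (z.im ^ 2) ∣ p := by
        rcases eq_or_ne z.im 0 with him | him
        · have hzre : p.eval z.re = 0 := by
            have hz' : z = (z.re : ℂ) := Complex.ext rfl (by simpa using him)
            have h0' : aeval z p = 0 := by rw [aeval_def, ← eval_map]; exact hz
            rw [hz', show ((z.re : ℝ) : ℂ) = algebraMap ℝ ℂ z.re from rfl,
              aeval_algebraMap_apply] at h0'
            simpa using h0'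
          simpa [him] using sq_dvd_of_nonneg_of_root p hp hzre
        · have h0' : aeval z p = 0 := by
            rw [aeval_def, ← eval_map]; exact hz
          have hdvd := p.quadratic_dvd_of_aeval_eq_zero_im_ne_zero h0' him
          have hnorm : (‖z‖ ^ 2 : ℝ) = z.re ^ 2 + z.im ^ 2 := by
            rw [Complex.sq_norm, Complex.normSq_apply]; ring
          have : (X : ℝ[X]) ^ 2 - C (2 * z.re) * X + C (‖z‖ ^ 2) =
              (X - C z.re) ^ 2 + C (z.im ^ 2) := by
            rw [hnorm]; simp only [map_add, map_mul, map_pow, map_ofNat, C_pow]; ring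
          rwa [this] at hdvd
      set Δ : ℝ[X] := (X - C z.re) ^ 2 + C (z.im ^ 2) with hΔdef
      have hΔeval : ∀ x, Δ.eval x = (x - z.re) ^ 2 + z.im ^ 2 := by intro x; simp [hΔdef]
      have hΔpos : ∀ x, x ≠ z.re → 0 < Δ.eval x := by
        intro x hx
        rw [hΔeval]
        have h' : x - z.re ≠ 0 := sub_ne_zero.mpr hx
        have : 0 < (x - z.re) ^ 2 := by positivity
        nlinarith [sq_nonneg z.im]
      have htnn : ∀ x, 0 ≤ t.eval x := by
        have hne : ∀ x, x ≠ z.re → 0 ≤ t.eval x := by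
          intro x hx
          have h1 := hp x
          rw [ht, eval_mul] at h1
          nlinarith [hΔpos x hx]
        intro x
        rcases eq_or_ne x z.re with rfl | hx
        · have hclosed : IsClosed {y : ℝ | 0 ≤ t.eval y} :=
            isClosed_le continuous_const t.continuous
          have hsub : ({z.re}ᶜ : Set ℝ) ⊆ {y : ℝ | 0 ≤ t.eval y} := fun y hy => hne y hy
          have hcl : closure ({z.re}ᶜ : Set ℝ) ⊆ {y : ℝ | 0 ≤ t.eval y} :=
            hclosed.closure_subset_iff.mpr hsub
          exact hcl (by rw [(dense_compl_singleton z.re).closure_eq]; trivial)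
        · exact hne x hx
      have hΔdegree : Δ.natDegree = 2 := by
        rw [hΔdef, natDegree_add_C, natDegree_pow, natDegree_X_sub_C]
      have hΔ0 : Δ ≠ 0 := fun h => by simp [h] at hΔdegree
      have ht0 : t ≠ 0 := fun h => hp0 (by rw [ht, h, mul_zero])
      have hdegt : t.natDegree + 2 = p.natDegree := by
        rw [ht, natDegree_mul hΔ0 ht0, hΔdegree]; ring
      have hlt : t.natDegree < n := by omega
      obtain ⟨a, b, hab⟩ := ih t.natDegree hlt t le_rfl htnn
      refine ⟨(X - C z.re) * a - C z.im * b, (X - C z.re) * b + C z.im * a, ?_⟩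
      have hC : C (z.im ^ 2) = (C z.im : ℝ[X]) ^ 2 := by rw [C_pow]
      rw [ht, hab, hΔdef, hC]; ring

open Polynomial in
private lemma nonneg_sos (p : ℝ[X]) (hp : ∀ x, 0 ≤ p.eval x) :
    ∃ a b : ℝ[X], p = a ^ 2 + b ^ 2 :=
  nonneg_sos_aux p.natDegree p le_rfl hp

open Polynomial Filter in
private lemma comp_negX_degree (r : ℝ[X]) : (r.comp (-X : ℝ[X])).degree = r.degree := by
  rcases eq_or_ne r 0 with rfl | hr
  · simp
  · have hne : r.comp (-X : ℝ[X]) ≠ 0 := by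
      intro h
      apply hr
      apply Polynomial.funext
      intro x
      have := congrArg (Polynomial.eval (-x)) h
      rw [eval_comp] at this
      simpa using this
    rw [degree_eq_natDegree hr, degree_eq_natDegree hne, natDegree_comp]
    norm_num

open Polynomial Filter in
private lemma comp_negX_eval (r : ℝ[X]) (x : ℝ) :
    (r.comp (-X : ℝ[X])).eval x = r.eval (-x) := by
  rw [eval_comp]; simp

open Polynomial Filter in
private lemma exists_global_bound (p q : ℝ[X]) (hpq : p.degree ≤ q.degree)
    (hq : ∀ x, 1 ≤ q.eval x) :
    ∃ c : ℝ, 0 < c ∧ ∀ x, p.eval x ≤ c * q.eval x := by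
  have hqpos : ∀ x, (0 : ℝ) < q.eval x := fun x => lt_of_lt_of_le one_pos (hq x)
  obtain ⟨c₁, hc₁⟩ := Asymptotics.isBigO_iff.mp (p.isBigO_of_degree_le q hpq)
  obtain ⟨A, hA⟩ := Filter.eventually_atTop.mp hc₁
  have hpq' : (p.comp (-X : ℝ[X])).degree ≤ (q.comp (-X : ℝ[X])).degree := by
    rw [comp_negX_degree, comp_negX_degree]; exact hpq
  obtain ⟨c₂, hc₂⟩ := Asymptotics.isBigO_iff.mp
    ((p.comp (-X : ℝ[X])).isBigO_of_degree_le (q.comp (-X : ℝ[X])) hpq')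
  obtain ⟨B, hB⟩ := Filter.eventually_atTop.mp hc₂
  obtain ⟨M, hM⟩ := (isCompact_Icc (a := -B) (b := A)).exists_bound_of_continuousOn
    (p.continuous.continuousOn)
  refine ⟨max (max c₁ c₂) (max M 0) + 1, by positivity, ?_⟩
  set c := max (max c₁ c₂) (max M 0) + 1 with hc
  intro x
  have hqx := hq x
  have habs : ‖q.eval x‖ = q.eval x := Real.norm_of_nonneg (hqpos x).le
  rcases le_or_gt A x with hx | hx
  · have := hA x hx
    rw [habs] at this
    calc p.eval x ≤ ‖p.eval x‖ := le_abs_self _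
      _ ≤ c₁ * q.eval x := this
      _ ≤ c * q.eval x := by
          apply mul_le_mul_of_nonneg_right _ (hqpos x).le
          linarith [le_max_left c₁ c₂, le_max_left (c₁ ⊔ c₂) (M ⊔ 0)]
  · rcases le_or_gt x (-B) with hx' | hx'
    · have hBx : B ≤ -x := by linarith
      have := hB (-x) hBx
      rw [comp_negX_eval, comp_negX_eval, neg_neg, habs] at this
      calc p.eval x ≤ ‖p.eval x‖ := le_abs_self _
        _ ≤ c₂ * q.eval x := this
        _ ≤ c * q.eval x := by
            apply mul_le_mul_of_nonneg_right _ (hqpos x).le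
            linarith [le_max_right c₁ c₂, le_max_left (c₁ ⊔ c₂) (M ⊔ 0)]
    · have hmem : x ∈ Set.Icc (-B) A := ⟨hx'.le, hx.le⟩
      have := hM x hmem
      calc p.eval x ≤ ‖p.eval x‖ := le_abs_self _
        _ ≤ M := this
        _ ≤ c * 1 := by
            rw [mul_one]; linarith [le_max_left M 0, le_max_right (c₁ ⊔ c₂) (M ⊔ 0)]
        _ ≤ c * q.eval x := by
            apply mul_le_mul_of_nonneg_left hqx
            positivity

open Polynomial Filter in
private lemma le_of_bound (f g : ℝ[X]) (k : ℝ)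
    (h : ∀ x : ℝ, (f.eval x) ^ 2 ≤ k ^ 2 * ((g.eval x) ^ 2 + 1)) :
    f.natDegree ≤ g.natDegree := by
  by_contra hlt
  push_neg at hlt
  have hf0 : f ≠ 0 := by rintro rfl; simp at hlt
  have hq1 : ∀ x, (1 : ℝ) ≤ (g ^ 2 + 1).eval x := by
    intro x; simp only [eval_add, eval_pow, eval_one]; nlinarith [sq_nonneg (g.eval x)]
  have hq0 : (g ^ 2 + 1 : ℝ[X]) ≠ 0 := by
    intro h'
    have := hq1 0
    rw [h'] at this
    simp only [eval_zero] at this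
    linarith
  have hdeg : (g ^ 2 + 1 : ℝ[X]).degree < (f ^ 2).degree := by
    rw [degree_eq_natDegree hq0, degree_eq_natDegree (pow_ne_zero 2 hf0)]
    have h1 : (g ^ 2 + (1 : ℝ[X])).natDegree = 2 * g.natDegree := by
      rw [show (g ^ 2 + (1 : ℝ[X])) = g ^ 2 + C 1 by simp, natDegree_add_C, natDegree_pow]
    have h2 : ((f : ℝ[X]) ^ 2).natDegree = 2 * f.natDegree := by rw [natDegree_pow]
    rw [h1, h2]
    exact_mod_cast (by omega : 2 * g.natDegree < 2 * f.natDegree)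
  have htend := Polynomial.abs_div_tendsto_atTop_of_degree_gt (f ^ 2) (g ^ 2 + 1) hdeg hq0
  obtain ⟨x, hx⟩ := (htend.eventually_gt_atTop (k ^ 2)).exists
  have e1 : ((f : ℝ[X]) ^ 2).eval x = (f.eval x) ^ 2 := by simp
  have e2 : ((g : ℝ[X]) ^ 2 + 1).eval x = (g.eval x) ^ 2 + 1 := by simp
  rw [e1, e2, abs_of_nonneg (by positivity)] at hx
  have hgx : (0 : ℝ) < (g.eval x) ^ 2 + 1 := by positivity
  have hlt2 := (lt_div_iff₀ hgx).mp hx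
  nlinarith [h x]

open Polynomial Filter in
private lemma cert_of_le (f g : ℝ[X]) (h : f.natDegree ≤ g.natDegree) :
    ∃ c : ℝ, 0 < c ∧ ∀ c', c ≤ c' →
      ∃ a b : ℝ[X], C c' * (g ^ 2 + 1) = f ^ 2 + a ^ 2 + b ^ 2 := by
  have hq1 : ∀ x, (1 : ℝ) ≤ (g ^ 2 + 1).eval x := by
    intro x; simp only [eval_add, eval_pow, eval_one]; nlinarith [sq_nonneg (g.eval x)]
  have hdeg : ((f : ℝ[X]) ^ 2).degree ≤ (g ^ 2 + 1 : ℝ[X]).degree := by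
    rcases eq_or_ne f 0 with rfl | hf
    · rw [show ((0 : ℝ[X]) ^ 2) = 0 by ring, degree_zero]
      exact bot_le
    · have hq0 : (g ^ 2 + 1 : ℝ[X]) ≠ 0 := by
        intro h'
        have := hq1 0
        rw [h'] at this
        simp only [eval_zero] at this
        linarith
      rw [degree_eq_natDegree (pow_ne_zero 2 hf), degree_eq_natDegree hq0]
      have h1 : (g ^ 2 + (1 : ℝ[X])).natDegree = 2 * g.natDegree := by
        rw [show (g ^ 2 + (1 : ℝ[X])) = g ^ 2 + C 1 by simp, natDegree_add_C, natDegree_pow]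
      rw [natDegree_pow, h1]
      exact_mod_cast (by omega : 2 * f.natDegree ≤ 2 * g.natDegree)
  obtain ⟨c, hc, hcb⟩ := exists_global_bound (f ^ 2) (g ^ 2 + 1) hdeg hq1
  refine ⟨c, hc, fun c' hc' => ?_⟩
  have hnn : ∀ x, 0 ≤ (C c' * (g ^ 2 + 1) - f ^ 2).eval x := by
    intro x
    have h1 := hcb x
    have h2 := hq1 x
    have key : 0 ≤ c' * ((g ^ 2 + 1).eval x) - ((f : ℝ[X]) ^ 2).eval x := by
      nlinarith [mul_nonneg (sub_nonneg.mpr hc') (le_trans zero_le_one h2)]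
    simpa only [eval_sub, eval_mul, eval_C] using key
  obtain ⟨a, b, hab⟩ := nonneg_sos _ hnn
  exact ⟨a, b, by linear_combination hab⟩
open Polynomial in
/-- The set `{(f,g) ∈ ℝ[z]² : deg f = deg g}` is Diophantine over
`ℝ[z]`, where `deg` is the usual degree with nonzero constants of degree `0` and
`deg 0 = 0`. -/
theorem real_poly_equal_degree_diophantine :
    IsDiophantine2 {p : Polynomial ℝ × Polynomial ℝ | p.1.natDegree = p.2.natDegree} := by
  classical
  refine ⟨6, 3,
    ![MvPolynomial.X (Sum.inr 0) * MvPolynomial.X (Sum.inr 1) - 1,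
      MvPolynomial.X (Sum.inr 0) ^ 2 * (MvPolynomial.X (Sum.inl 1) ^ 2 + 1) -
        (MvPolynomial.X (Sum.inl 0) ^ 2 + MvPolynomial.X (Sum.inr 2) ^ 2 +
          MvPolynomial.X (Sum.inr 3) ^ 2),
      MvPolynomial.X (Sum.inr 0) ^ 2 * (MvPolynomial.X (Sum.inl 0) ^ 2 + 1) -
        (MvPolynomial.X (Sum.inl 1) ^ 2 + MvPolynomial.X (Sum.inr 4) ^ 2 +
          MvPolynomial.X (Sum.inr 5) ^ 2)], ?_⟩
  rintro ⟨f, g⟩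
  simp only [Set.mem_setOf_eq]
  constructor
  · intro h
    obtain ⟨c₁, hc₁, hcert₁⟩ := cert_of_le f g h.le
    obtain ⟨c₂, hc₂, hcert₂⟩ := cert_of_le g f h.ge
    obtain ⟨a1, b1, h1⟩ := hcert₁ (max c₁ c₂) (le_max_left _ _)
    obtain ⟨a2, b2, h2⟩ := hcert₂ (max c₁ c₂) (le_max_right _ _)
    have hcpos : 0 < max c₁ c₂ := lt_of_lt_of_le hc₁ (le_max_left _ _)
    set s : ℝ := Real.sqrt (max c₁ c₂) with hs
    have hs0 : s ≠ 0 := (Real.sqrt_pos.mpr hcpos).ne'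
    have hsq : (C s : ℝ[X]) ^ 2 = C (max c₁ c₂) := by
      rw [← C_pow, hs, Real.sq_sqrt hcpos.le]
    refine ⟨![C s, C s⁻¹, a1, b1, a2, b2], ?_⟩
    have v1 : (![C s, C s⁻¹, a1, b1, a2, b2] : Fin 6 → ℝ[X]) 1 = C s⁻¹ := rfl
    have v2 : (![C s, C s⁻¹, a1, b1, a2, b2] : Fin 6 → ℝ[X]) 2 = a1 := rfl
    have v3 : (![C s, C s⁻¹, a1, b1, a2, b2] : Fin 6 → ℝ[X]) 3 = b1 := rfl
    have v4 : (![C s, C s⁻¹, a1, b1, a2, b2] : Fin 6 → ℝ[X]) 4 = a2 := rfl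
    have v5 : (![C s, C s⁻¹, a1, b1, a2, b2] : Fin 6 → ℝ[X]) 5 = b2 := rfl
    have w1 : (![f, g] : Fin 2 → ℝ[X]) 1 = g := rfl
    simp only [Fin.forall_fin_succ, IsEmpty.forall_iff, and_true,
      Matrix.cons_val_zero, Matrix.cons_val_succ, map_sub, map_mul, map_add, map_pow,
      map_one, MvPolynomial.eval_X, Sum.elim_inl, Sum.elim_inr]
    refine ⟨?_, ?_, ?_⟩
    · rw [v1, ← C_mul, mul_inv_cancel₀ hs0, C_1, sub_self]
    · rw [v2, v3, w1, hsq, sub_eq_zero]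
      linear_combination h1
    · rw [v4, v5, w1, hsq, sub_eq_zero]
      linear_combination h2
  · rintro ⟨b, hb⟩
    simp only [Fin.forall_fin_succ, IsEmpty.forall_iff, and_true,
      Matrix.cons_val_zero, Matrix.cons_val_succ, map_sub, map_mul, map_add, map_pow,
      map_one, MvPolynomial.eval_X, Sum.elim_inl, Sum.elim_inr] at hb
    obtain ⟨h0, h1, h2⟩ := hb
    rw [sub_eq_zero] at h0 h1 h2
    obtain ⟨k, hk, hbk⟩ := Polynomial.isUnit_iff.mp (IsUnit.of_mul_eq_one _ h0)
    rw [← hbk] at h1 h2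
    have w1 : (![f, g] : Fin 2 → ℝ[X]) 1 = g := rfl
    rw [w1] at h1 h2
    have hfg : f.natDegree ≤ g.natDegree := by
      apply le_of_bound f g k
      intro x
      have e := congrArg (Polynomial.eval x) h1
      simp only [eval_mul, eval_pow, eval_add, eval_one, eval_C] at e
      nlinarith [sq_nonneg ((b 2).eval x), sq_nonneg ((b 3).eval x)]
    have hgf : g.natDegree ≤ f.natDegree := by
      apply le_of_bound g f k
      intro x
      have e := congrArg (Polynomial.eval x) h2
      simp only [eval_mul, eval_pow, eval_add, eval_one, eval_C] at e
      nlinarith [sq_nonneg ((b 4).eval x), sq_nonneg ((b 5).eval x)]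
    exact le_antisymm hfg hgf
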